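/- arXiv:1610.09783 — 6 statements merged into one kernel-verified Lean document; each statement's English description precedes it below -/
import Mathlib

section
/- Let M be a mixed graph of order n ≥ 3 with no isolated vertices. Then √(2n/(n-1)) ≤ E_{R_H}(M) ≤ n. -/
open Matrix BigOperators
noncomputable section
open scoped Classical

-- general lemmas about hermitian complex matrices
lemma herm_sum_eigen {n : Type} [Fintype n] [DecidableEq n]
    (A : Matrix n n ℂ) (hA : A.IsHermitian) :
    A.trace = ∑ i, (hA.eigenvalues i : ℂ) := by
  conv_lhs => rw [show A = (hA.eigenvectorUnitary : Matrix n n ℂ) * Matrix.diagonal ((↑) ∘ hA.eigenvalues) * star (hA.eigenvectorUnitary : Matrix n n ℂ) from hA.spectral_theorem]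
  rw [Matrix.trace_mul_cycle,
    (Matrix.mem_unitaryGroup_iff').mp (hA.eigenvectorUnitary).2, one_mul,
    Matrix.trace_diagonal]
  rfl

lemma herm_sum_eigen_sq {n : Type} [Fintype n] [DecidableEq n]
    (A : Matrix n n ℂ) (hA : A.IsHermitian) :
    (A * A).trace = ∑ i, ((hA.eigenvalues i : ℂ))^2 := by
  set U : Matrix n n ℂ := (hA.eigenvectorUnitary : Matrix n n ℂ) with hU
  set D : Matrix n n ℂ := Matrix.diagonal ((↑) ∘ hA.eigenvalues) with hD
  have h1 : star U * U = 1 := (Matrix.mem_unitaryGroup_iff').mp (hA.eigenvectorUnitary).2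
  have hsp : A = U * D * star U := hA.spectral_theorem
  have h2 : A * A = U * (D * D) * star U := by
    rw [hsp]
    simp only [Matrix.mul_assoc]
    rw [← Matrix.mul_assoc (star U) U, h1, Matrix.one_mul]
  rw [h2, Matrix.trace_mul_cycle, ← Matrix.mul_assoc, h1, Matrix.one_mul, hD,
    Matrix.diagonal_mul_diagonal, Matrix.trace_diagonal]
  simp [sq]
structure MixedGraph (V : Type) [Fintype V] [DecidableEq V] where
  h : Matrix V V ℂ
  herm : h.IsHermitian
  loopless : ∀ k, h k k = 0
  entries : ∀ k l, h k l = 0 ∨ h k l = 1 ∨ h k l = Complex.I ∨ h k l = -Complex.I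

namespace MixedGraph

variable {V : Type} [Fintype V] [DecidableEq V]

/-- Degree of a vertex in the underlying graph. -/
def deg (M : MixedGraph V) (k : V) : ℕ :=
  (Finset.univ.filter fun l => M.h k l ≠ 0).card

/-- The Hermitian–Randić matrix of a mixed graph. -/
def RH (M : MixedGraph V) : Matrix V V ℂ :=
  fun k l => M.h k l / ((Real.sqrt (M.deg k) * Real.sqrt (M.deg l) : ℝ) : ℂ)

theorem RH_isHermitian (M : MixedGraph V) : (M.RH).IsHermitian := by
  ext k l
  simp only [RH, Matrix.conjTranspose_apply, star_div₀, Complex.star_def,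
    Complex.conj_ofReal, M.herm.apply k l, mul_comm (Real.sqrt (M.deg l))]

/-- The Hermitian–Randić energy: sum of absolute values of the eigenvalues of `RH`. -/
def energyRH (M : MixedGraph V) : ℝ := ∑ i, |M.RH_isHermitian.eigenvalues i|

/-- The Hermitian energy: sum of absolute values of the eigenvalues of `H(M)`. -/
def energyH (M : MixedGraph V) : ℝ := ∑ i, |M.herm.eigenvalues i|

/-- The general Randić index `R₋₁` of the underlying graph. -/
def Rm1 (M : MixedGraph V) : ℝ :=
  (1 / 2) * ∑ k, ∑ l, if M.h k l ≠ 0 then ((M.deg k : ℝ) * (M.deg l : ℝ))⁻¹ else 0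

/-- The underlying simple graph of a mixed graph. -/
def underlying (M : MixedGraph V) : SimpleGraph V where
  Adj k l := M.h k l ≠ 0
  symm := ⟨by
    intro k l hkl h0
    exact hkl (by rw [← M.herm.apply k l, h0, star_zero])⟩
  loopless := ⟨fun k hk => hk (M.loopless k)⟩

end MixedGraph

namespace MixedGraph
variable {V : Type} [Fintype V] [DecidableEq V]

lemma trace_RH (M : MixedGraph V) : (M.RH).trace = 0 := by
  unfold Matrix.trace
  simp [Matrix.diag, RH, M.loopless]

lemma normSq_RH (M : MixedGraph V) (k l : V) :
    Complex.normSq (M.RH k l) =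
      if M.h k l ≠ 0 then ((M.deg k : ℝ) * (M.deg l : ℝ))⁻¹ else 0 := by
  by_cases h0 : M.h k l = 0
  · simp [RH, h0]
  · have hlk : M.h l k ≠ 0 := by
      intro h; exact h0 (by rw [← M.herm.apply k l, h, star_zero])
    have hdk : 0 < M.deg k :=
      Finset.card_pos.mpr ⟨l, by simp [deg, h0]⟩
    have hdl : 0 < M.deg l :=
      Finset.card_pos.mpr ⟨k, by simp [deg, hlk]⟩
    have hone : Complex.normSq (M.h k l) = 1 := by
      rcases M.entries k l with h | h | h | h
      · exact absurd h h0
      all_goals simp [h]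
    rw [if_pos h0]
    rw [RH]
    rw [Complex.normSq_div, Complex.normSq_ofReal, hone]
    rw [mul_mul_mul_comm, Real.mul_self_sqrt (by positivity),
      Real.mul_self_sqrt (by positivity), one_div]

lemma trace_RH_sq (M : MixedGraph V) :
    ((M.RH) * (M.RH)).trace = ((2 * M.Rm1 : ℝ) : ℂ) := by
  have : ((M.RH) * (M.RH)).trace = ∑ k, ∑ l, M.RH k l * M.RH l k := by
    simp [Matrix.trace, Matrix.diag, Matrix.mul_apply]
  rw [this]
  have : ∀ k l : V, M.RH k l * M.RH l k = ((Complex.normSq (M.RH k l) : ℝ) : ℂ) := by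
    intro k l
    rw [← M.RH_isHermitian.apply l k, Complex.star_def, Complex.mul_conj]
  simp only [this, normSq_RH]
  rw [Rm1]
  push_cast
  ring

lemma sum_eigen (M : MixedGraph V) : ∑ i, M.RH_isHermitian.eigenvalues i = 0 := by
  have := herm_sum_eigen _ M.RH_isHermitian
  rw [trace_RH] at this
  have : ((∑ i, M.RH_isHermitian.eigenvalues i : ℝ) : ℂ) = 0 := by push_cast; rw [← this]
  exact_mod_cast this

lemma sum_eigen_sq (M : MixedGraph V) :
    ∑ i, (M.RH_isHermitian.eigenvalues i) ^ 2 = 2 * M.Rm1 := by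
  have := herm_sum_eigen_sq _ M.RH_isHermitian
  rw [trace_RH_sq] at this
  have : ((∑ i, (M.RH_isHermitian.eigenvalues i) ^ 2 : ℝ) : ℂ) = ((2 * M.Rm1 : ℝ) : ℂ) := by
    push_cast; rw [← this]; push_cast; ring
  exact_mod_cast this


lemma deg_le (M : MixedGraph V) (l : V) : M.deg l ≤ Fintype.card V - 1 := by
  have : (Finset.univ.filter fun l' => M.h l l' ≠ 0) ⊆ Finset.univ.erase l := by
    intro x hx
    simp only [Finset.mem_filter, Finset.mem_univ, true_and] at hx
    refine Finset.mem_erase.mpr ⟨?_, Finset.mem_univ x⟩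
    intro h; exact hx (h ▸ M.loopless l)
  calc M.deg l ≤ (Finset.univ.erase l).card := Finset.card_le_card this
    _ = Fintype.card V - 1 := by rw [Finset.card_erase_of_mem (Finset.mem_univ l), Finset.card_univ]

lemma Rm1_bounds (M : MixedGraph V) (hn : 3 ≤ Fintype.card V) (hiso : ∀ k, M.deg k ≠ 0) :
    (Fintype.card V : ℝ) / ((Fintype.card V : ℝ) - 1) ≤ 2 * M.Rm1 ∧
      2 * M.Rm1 ≤ (Fintype.card V : ℝ) := by
  set n := Fintype.card V with hn'
  have hn1 : (1 : ℝ) ≤ (n : ℝ) - 1 := by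
    have : (3 : ℝ) ≤ (n : ℝ) := by exact_mod_cast hn
    linarith
  have hn1pos : (0 : ℝ) < (n : ℝ) - 1 := by linarith
  have hdegle : ∀ l, (M.deg l : ℝ) ≤ (n : ℝ) - 1 := by
    intro l
    have h1 := M.deg_le l
    have : (M.deg l : ℝ) ≤ ((n - 1 : ℕ) : ℝ) := by exact_mod_cast h1
    rwa [Nat.cast_sub (by omega), Nat.cast_one] at this
  have hdegpos : ∀ l, (0 : ℝ) < (M.deg l : ℝ) := by
    intro l; exact_mod_cast Nat.pos_of_ne_zero (hiso l)
  have hS : 2 * M.Rm1 =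
      ∑ k, ∑ l ∈ Finset.univ.filter (fun l => M.h k l ≠ 0),
        ((M.deg k : ℝ) * (M.deg l : ℝ))⁻¹ := by
    rw [Rm1, show (2:ℝ) * ((1/2) * (∑ k, ∑ l, if M.h k l ≠ 0 then ((M.deg k : ℝ) * (M.deg l : ℝ))⁻¹ else 0)) = ∑ k, ∑ l, if M.h k l ≠ 0 then ((M.deg k : ℝ) * (M.deg l : ℝ))⁻¹ else 0 from by ring]
    simp_rw [Finset.sum_filter]
  have hrow_low : ∀ k : V, ((n : ℝ) - 1)⁻¹ ≤
      ∑ l ∈ Finset.univ.filter (fun l => M.h k l ≠ 0),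
        ((M.deg k : ℝ) * (M.deg l : ℝ))⁻¹ := by
    intro k
    have step : ∑ l ∈ Finset.univ.filter (fun l => M.h k l ≠ 0),
        ((M.deg k : ℝ) * ((n : ℝ) - 1))⁻¹ ≤
        ∑ l ∈ Finset.univ.filter (fun l => M.h k l ≠ 0),
        ((M.deg k : ℝ) * (M.deg l : ℝ))⁻¹ := by
      refine Finset.sum_le_sum fun l _ => ?_
      apply inv_anti₀
      · exact mul_pos (hdegpos k) (hdegpos l)
      · exact mul_le_mul_of_nonneg_left (hdegle l) (hdegpos k).le
    refine le_trans (le_of_eq ?_) step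
    rw [Finset.sum_const, ← deg, nsmul_eq_mul, mul_inv,
      ← mul_assoc, mul_inv_cancel₀ (hdegpos k).ne', one_mul]
  have hrow_high : ∀ k : V,
      (∑ l ∈ Finset.univ.filter (fun l => M.h k l ≠ 0),
        ((M.deg k : ℝ) * (M.deg l : ℝ))⁻¹) ≤ 1 := by
    intro k
    have step : ∑ l ∈ Finset.univ.filter (fun l => M.h k l ≠ 0),
        ((M.deg k : ℝ) * (M.deg l : ℝ))⁻¹ ≤
        ∑ l ∈ Finset.univ.filter (fun l => M.h k l ≠ 0), ((M.deg k : ℝ))⁻¹ := by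
      refine Finset.sum_le_sum fun l _ => ?_
      apply inv_anti₀ (hdegpos k)
      nlinarith [hdegpos l, hdegpos k, (by exact_mod_cast Nat.one_le_iff_ne_zero.mpr (hiso l) : (1:ℝ) ≤ (M.deg l : ℝ))]
    refine le_trans step (le_of_eq ?_)
    rw [Finset.sum_const, ← deg, nsmul_eq_mul, mul_inv_cancel₀ (hdegpos k).ne']
  constructor
  · rw [hS, div_eq_mul_inv]
    calc (n : ℝ) * ((n : ℝ) - 1)⁻¹ = ∑ _k : V, ((n : ℝ) - 1)⁻¹ := by
          rw [Finset.sum_const, Finset.card_univ, nsmul_eq_mul, hn']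
      _ ≤ _ := Finset.sum_le_sum fun k _ => hrow_low k
  · rw [hS]
    calc _ ≤ ∑ _k : V, (1 : ℝ) := Finset.sum_le_sum fun k _ => hrow_high k
      _ = (n : ℝ) := by rw [Finset.sum_const, Finset.card_univ, nsmul_eq_mul, mul_one, hn']



end MixedGraph

/-- for a mixed graph of order `n ≥ 3` with no isolated vertices,
`√(2n/(n-1)) ≤ E_{R_H}(M) ≤ n`. -/
theorem energyRH_order_bounds {V : Type} [Fintype V] [DecidableEq V]
    (M : MixedGraph V) (hn : 3 ≤ Fintype.card V) (hiso : ∀ k, M.deg k ≠ 0) :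
    Real.sqrt (2 * (Fintype.card V : ℝ) / ((Fintype.card V : ℝ) - 1)) ≤ M.energyRH ∧
      M.energyRH ≤ (Fintype.card V : ℝ) := by
  set n := Fintype.card V with hn'
  set μ := M.RH_isHermitian.eigenvalues with hμ
  have hn3 : (3 : ℝ) ≤ (n : ℝ) := by exact_mod_cast hn
  have hnpos : (0 : ℝ) < (n : ℝ) := by linarith
  have hn1pos : (0 : ℝ) < (n : ℝ) - 1 := by linarith
  obtain ⟨hT1, hT2⟩ := M.Rm1_bounds hn hiso
  have hsum : ∑ i, μ i = 0 := M.sum_eigen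
  have hsumsq : ∑ i, μ i ^ 2 = 2 * M.Rm1 := M.sum_eigen_sq
  set E := M.energyRH with hE
  have hEdef : E = ∑ i, |μ i| := rfl
  have hE0 : 0 ≤ E := by
    rw [hEdef]; exact Finset.sum_nonneg fun i _ => abs_nonneg _
  -- upper bound
  have hup2 : E ^ 2 ≤ (n : ℝ) * (2 * M.Rm1) := by
    have h1 : (∑ i, |μ i|) ^ 2 ≤ (Finset.univ.card : ℝ) * ∑ i, |μ i| ^ 2 :=
      sq_sum_le_card_mul_sum_sq
    simp_rw [sq_abs] at h1
    rw [hsumsq, Finset.card_univ, ← hn'] at h1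
    rw [hEdef]; exact h1
  have hup : E ≤ (n : ℝ) := by
    have h2 : E ^ 2 ≤ (n : ℝ) ^ 2 := by nlinarith
    calc E = Real.sqrt (E ^ 2) := (Real.sqrt_sq hE0).symm
      _ ≤ Real.sqrt ((n : ℝ) ^ 2) := Real.sqrt_le_sqrt h2
      _ = (n : ℝ) := Real.sqrt_sq hnpos.le
  -- lower bound
  set a := fun i => max (μ i) 0 with ha'
  set b := fun i => max (-μ i) 0 with hb'
  have ha0 : ∀ i, 0 ≤ a i := fun i => le_max_right _ _
  have hb0 : ∀ i, 0 ≤ b i := fun i => le_max_right _ _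
  have hdiff : ∀ i, a i - b i = μ i := by
    intro i
    rcases le_total (μ i) 0 with h | h
    · simp [ha', hb', max_eq_right h, max_eq_left (by linarith : (0:ℝ) ≤ -μ i)]
    · simp [ha', hb', max_eq_left h, max_eq_right (by linarith : -μ i ≤ 0)]
  have habs : ∀ i, |μ i| = a i + b i := fun i =>
    (max_zero_add_max_neg_zero_eq_abs_self (μ i)).symm
  have hsq : ∀ i, μ i ^ 2 = a i ^ 2 + b i ^ 2 := by
    intro i
    rcases le_total (μ i) 0 with h | h
    · rw [show a i = 0 from max_eq_right h,
        show b i = -μ i from max_eq_left (by linarith)]; ring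
    · rw [show a i = μ i from max_eq_left h,
        show b i = 0 from max_eq_right (by linarith)]; ring
  have hab : ∑ i, a i = ∑ i, b i := by
    have h0 : ∑ i, (a i - b i) = 0 := by simp_rw [hdiff]; exact hsum
    rw [Finset.sum_sub_distrib] at h0; linarith
  have hEab : E = 2 * ∑ i, a i := by
    rw [hEdef]; simp_rw [habs]; rw [Finset.sum_add_distrib, ← hab]; ring
  have hsq_sum : ∑ i, μ i ^ 2 ≤ E ^ 2 / 2 := by
    calc ∑ i, μ i ^ 2 = ∑ i, a i ^ 2 + ∑ i, b i ^ 2 := by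
          simp_rw [hsq]; rw [Finset.sum_add_distrib]
      _ ≤ (∑ i, a i) ^ 2 + (∑ i, b i) ^ 2 :=
          add_le_add (Finset.sum_sq_le_sq_sum_of_nonneg fun i _ => ha0 i)
            (Finset.sum_sq_le_sq_sum_of_nonneg fun i _ => hb0 i)
      _ = E ^ 2 / 2 := by rw [← hab, hEab]; ring
  have hlow2 : 2 * (n : ℝ) / ((n : ℝ) - 1) ≤ E ^ 2 := by
    have h3 : (n : ℝ) / ((n : ℝ) - 1) ≤ E ^ 2 / 2 := le_trans hT1 (hsumsq ▸ hsq_sum)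
    rw [mul_div_assoc]; linarith
  refine ⟨?_, hup⟩
  calc Real.sqrt (2 * (n : ℝ) / ((n : ℝ) - 1)) ≤ Real.sqrt (E ^ 2) :=
        Real.sqrt_le_sqrt hlow2
    _ = E := Real.sqrt_sq hE0
end
end

section
/- Let M be a mixed graph with no isolated vertices, with underlying graph M_U. Then E_{R_H}(M) ≥ 2√(R_{-1}(M_U)). -/
open Matrix BigOperators
noncomputable section
open scoped Classical

lemma trace_eq_sum_eig {n : Type*} [Fintype n] [DecidableEq n] {A : Matrix n n ℂ}
    (hA : A.IsHermitian) : A.trace = ∑ i, (hA.eigenvalues i : ℂ) := by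
  conv_lhs => rw [hA.spectral_theorem]
  rw [Unitary.conjStarAlgAut_apply, Matrix.trace_mul_cycle, (Matrix.mem_unitaryGroup_iff').mp (hA.eigenvectorUnitary).2,
    Matrix.one_mul]
  simp [Matrix.trace_diagonal]

lemma trace_sq_eq_sum_eig_sq {n : Type*} [Fintype n] [DecidableEq n] {A : Matrix n n ℂ}
    (hA : A.IsHermitian) : (A * A).trace = ∑ i, (hA.eigenvalues i : ℂ)^2 := by
  set U : Matrix n n ℂ := (hA.eigenvectorUnitary : Matrix n n ℂ)
  set D : Matrix n n ℂ := Matrix.diagonal (RCLike.ofReal ∘ hA.eigenvalues)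
  have hU : star U * U = 1 := (Matrix.mem_unitaryGroup_iff').mp (hA.eigenvectorUnitary).2
  have hAA : A * A = U * (D * D) * star U := by
    conv_lhs => rw [hA.spectral_theorem]
    calc U * D * star U * (U * D * star U) = U * D * (star U * U) * D * star U := by
          simp only [Matrix.mul_assoc]
      _ = U * (D * D) * star U := by rw [hU]; simp only [Matrix.mul_one, Matrix.mul_assoc]
  rw [hAA, Matrix.trace_mul_cycle, ← Matrix.mul_assoc, hU, Matrix.one_mul,
    Matrix.diagonal_mul_diagonal]
  simp [D, Matrix.trace_diagonal, sq]

lemma sq_sum_split {n : Type*} [Fintype n] [DecidableEq n] (f : n → ℝ) :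
    (∑ i, f i)^2 = (∑ i, (f i)^2) + ∑ i, ∑ j ∈ Finset.univ.erase i, f i * f j := by
  rw [sq, Finset.sum_mul_sum, ← Finset.sum_add_distrib]
  congr 1; ext i
  rw [← Finset.add_sum_erase _ _ (Finset.mem_univ i), sq]
/-- for a mixed graph with no isolated vertices,
`E_{R_H}(M) ≥ 2√(R₋₁(M_U))`. -/
theorem energyRH_ge_two_sqrt_Rm1 {V : Type} [Fintype V] [DecidableEq V]
    (M : MixedGraph V) (hiso : ∀ k, M.deg k ≠ 0) :
    2 * Real.sqrt M.Rm1 ≤ M.energyRH := by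
  set μ := M.RH_isHermitian.eigenvalues with hμ
  -- Fact A: the eigenvalues sum to zero
  have htr0 : ∑ i, μ i = 0 := by
    have h1 : (M.RH).trace = 0 := by
      simp [Matrix.trace, Matrix.diag, MixedGraph.RH, M.loopless]
    have h2 := trace_eq_sum_eig M.RH_isHermitian
    rw [h1] at h2
    exact_mod_cast h2.symm
  -- Fact B: the sum of squared eigenvalues equals 2 * Rm1
  have hQ : ∑ i, (μ i)^2 = 2 * M.Rm1 := by
    have key : ∀ k l, M.RH k l * M.RH l k =
        (((if M.h k l ≠ 0 then ((M.deg k : ℝ) * (M.deg l : ℝ))⁻¹ else 0) : ℝ) : ℂ) := by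
      intro k l
      have hlk : M.h l k = star (M.h k l) := by
        rw [M.herm.apply l k]
      by_cases h0 : M.h k l = 0
      · simp [MixedGraph.RH, h0, hlk]
      · have he : M.h k l * star (M.h k l) = 1 := by
          rcases M.entries k l with h | h | h | h
          · exact absurd h h0
          all_goals simp [h, Complex.mul_conj, Complex.normSq_I]
        have hc : ((Real.sqrt (M.deg k) * Real.sqrt (M.deg l) : ℝ) : ℂ) *
            ((Real.sqrt (M.deg l) * Real.sqrt (M.deg k) : ℝ) : ℂ) =
            (((M.deg k : ℝ) * (M.deg l : ℝ) : ℝ) : ℂ) := by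
          have hr : (Real.sqrt (M.deg k) * Real.sqrt (M.deg l)) * (Real.sqrt (M.deg l) * Real.sqrt (M.deg k))
              = (M.deg k : ℝ) * (M.deg l : ℝ) := by
            rw [show (Real.sqrt (M.deg k) * Real.sqrt (M.deg l)) * (Real.sqrt (M.deg l) * Real.sqrt (M.deg k))
              = (Real.sqrt (M.deg k) * Real.sqrt (M.deg k)) * (Real.sqrt (M.deg l) * Real.sqrt (M.deg l)) by ring,
            Real.mul_self_sqrt (Nat.cast_nonneg _), Real.mul_self_sqrt (Nat.cast_nonneg _)]
          rw [← Complex.ofReal_mul, hr]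
        simp only [MixedGraph.RH, hlk, h0, if_neg, ne_eq, not_true_eq_false, if_true,
          not_false_eq_true]
        rw [div_mul_div_comm, he, hc]
        push_cast
        rw [one_div]
    have h1 : (M.RH * M.RH).trace = ((2 * M.Rm1 : ℝ) : ℂ) := by
      have : (M.RH * M.RH).trace = ∑ k, ∑ l, M.RH k l * M.RH l k := by
        simp [Matrix.trace, Matrix.diag, Matrix.mul_apply]
      rw [this]
      simp only [key]
      rw [MixedGraph.Rm1]
      push_cast
      ring
    have h2 := trace_sq_eq_sum_eig_sq M.RH_isHermitian
    rw [h1] at h2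
    exact_mod_cast h2.symm
  have hQnn : 0 ≤ ∑ i, (μ i)^2 := Finset.sum_nonneg fun i _ => sq_nonneg _
  have hSnn : 0 ≤ M.energyRH := Finset.sum_nonneg fun i _ => abs_nonneg _
  -- the off-diagonal comparison
  have h1 := sq_sum_split (fun i => |μ i|)
  have h2 := sq_sum_split μ
  rw [htr0] at h2
  have hT : ∑ i, ∑ j ∈ Finset.univ.erase i, μ i * μ j = -(∑ i, (μ i)^2) := by
    have : (0:ℝ)^2 = 0 := by norm_num
    linarith [h2]
  have habs : |∑ i, ∑ j ∈ Finset.univ.erase i, μ i * μ j|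
      ≤ ∑ i, ∑ j ∈ Finset.univ.erase i, |μ i| * |μ j| := by
    refine (Finset.abs_sum_le_sum_abs _ _).trans ?_
    refine Finset.sum_le_sum fun i _ => ?_
    refine (Finset.abs_sum_le_sum_abs _ _).trans ?_
    refine Finset.sum_le_sum fun j _ => ?_
    rw [abs_mul]
  rw [hT, abs_neg, abs_of_nonneg hQnn] at habs
  have hE2 : M.energyRH ^ 2 = (∑ i, (μ i)^2) + ∑ i, ∑ j ∈ Finset.univ.erase i, |μ i| * |μ j| := by
    rw [MixedGraph.energyRH]
    rw [h1]
    simp [sq_abs]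
  have hfour : 4 * M.Rm1 ≤ M.energyRH ^ 2 := by linarith
  have hRnn : 0 ≤ M.Rm1 := by linarith
  calc 2 * Real.sqrt M.Rm1 = Real.sqrt (4 * M.Rm1) := by
        rw [show (4:ℝ) * M.Rm1 = 2^2 * M.Rm1 by ring, Real.sqrt_mul (by positivity),
          Real.sqrt_sq (by norm_num)]
    _ ≤ Real.sqrt (M.energyRH ^ 2) := Real.sqrt_le_sqrt hfour
    _ = M.energyRH := Real.sqrt_sq hSnn
end
end

section
/- Let M be a mixed graph of order n with underlying graph M_U, and let μ_1 ≥ ⋯ ≥ μ_n be the eigenvalues of R_H(M). Set α = min_i |μ_i| and β = max{μ_1, |μ_n|}. If α + β > 0, then E_{R_H}(M) ≥ (2R_{-1}(M_U) + nαβ)/(α + β). -/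
open Matrix BigOperators

noncomputable section
open scoped Classical

lemma deg_pos {V : Type} [Fintype V] [DecidableEq V] (M : MixedGraph V) {k l : V}
    (h : M.h k l ≠ 0) : 0 < M.deg k := by
  rw [MixedGraph.deg, Finset.card_pos]
  exact ⟨l, by simp [h]⟩

lemma normSq_RH {V : Type} [Fintype V] [DecidableEq V] (M : MixedGraph V) (k l : V) :
    (Complex.normSq (M.RH k l) : ℝ) =
      if M.h k l ≠ 0 then ((M.deg k : ℝ) * (M.deg l : ℝ))⁻¹ else 0 := by
  by_cases h : M.h k l = 0
  · simp [MixedGraph.RH, h]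
  · have hk : (0:ℝ) < M.deg k := by exact_mod_cast deg_pos M h
    have hl : (0:ℝ) < M.deg l := by
      have : M.h l k ≠ 0 := fun h0 => h (by rw [← M.herm.apply k l, h0, star_zero])
      exact_mod_cast deg_pos M this
    have h1 : Complex.normSq (M.h k l) = 1 := by
      rcases M.entries k l with h0 | h0 | h0 | h0 <;> simp [h0] at h ⊢
    simp only [MixedGraph.RH, Complex.normSq_div, h1, if_pos h, Complex.normSq_ofReal]
    rw [mul_mul_mul_comm, Real.mul_self_sqrt hk.le, Real.mul_self_sqrt hl.le, one_div]

lemma trace_RH_sq {V : Type} [Fintype V] [DecidableEq V] (M : MixedGraph V) :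
    ∑ i, (M.RH_isHermitian.eigenvalues i)^2 = 2 * M.Rm1 := by
  have h1 : (M.RH * M.RH).trace = ∑ i, ((M.RH_isHermitian.eigenvalues i : ℂ))^2 := by
    conv_lhs => rw [M.RH_isHermitian.spectral_theorem]
    set U := (M.RH_isHermitian.eigenvectorUnitary : Matrix V V ℂ)
    set D := Matrix.diagonal (RCLike.ofReal ∘ M.RH_isHermitian.eigenvalues : V → ℂ)
    have hU : star U * U = 1 :=
      (Matrix.mem_unitaryGroup_iff').mp M.RH_isHermitian.eigenvectorUnitary.2
    calc (U * D * star U * (U * D * star U)).trace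
        = (U * (D * D) * star U).trace := by
          rw [show U * D * star U * (U * D * star U) = U * ((D * (star U * U)) * D) * star U by
            simp only [Matrix.mul_assoc]]
          rw [hU, Matrix.mul_one]
      _ = ((star U * U) * (D * D)).trace := by
          rw [Matrix.trace_mul_comm, Matrix.mul_assoc]
      _ = ∑ i, ((M.RH_isHermitian.eigenvalues i : ℂ))^2 := by
          rw [hU, Matrix.one_mul, Matrix.diagonal_mul_diagonal, Matrix.trace_diagonal]
          simp [sq]
  have key : ∀ k l : V, M.RH k l * M.RH l k =
      ((if M.h k l ≠ 0 then ((M.deg k : ℝ) * (M.deg l : ℝ))⁻¹ else 0 : ℝ) : ℂ) := by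
    intro k l
    rw [← M.RH_isHermitian.apply l k, Complex.star_def, Complex.mul_conj, normSq_RH]
  have h2 : (M.RH * M.RH).trace = ((2 * M.Rm1 : ℝ) : ℂ) := by
    simp only [Matrix.trace, Matrix.diag, Matrix.mul_apply, key, MixedGraph.Rm1]
    push_cast
    ring
  rw [h1] at h2
  exact_mod_cast h2

/-- with `α = minᵢ |μᵢ|` and `β = maxᵢ |μᵢ| = max{μ₁, |μₙ|}`, if
`α + β > 0` then `E_{R_H}(M) ≥ (2R₋₁(M_U) + nαβ)/(α + β)`. -/
theorem energyRH_ge_of_min_max {V : Type} [Fintype V] [DecidableEq V]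
    (M : MixedGraph V) (α β : ℝ)
    (hα : IsLeast (Set.range fun i => |M.RH_isHermitian.eigenvalues i|) α)
    (hβ : IsGreatest (Set.range fun i => |M.RH_isHermitian.eigenvalues i|) β)
    (hpos : 0 < α + β) :
    (2 * M.Rm1 + (Fintype.card V : ℝ) * α * β) / (α + β) ≤ M.energyRH := by
  set μ := M.RH_isHermitian.eigenvalues with hμ
  have key : ∀ i, (μ i)^2 + α*β ≤ (α+β) * |μ i| := by
    intro i
    have h1 : α ≤ |μ i| := hα.2 ⟨i, rfl⟩
    have h2 : |μ i| ≤ β := hβ.2 ⟨i, rfl⟩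
    nlinarith [sq_abs (μ i)]
  rw [div_le_iff₀ hpos]
  calc 2 * M.Rm1 + (Fintype.card V : ℝ) * α * β
      = ∑ i, ((μ i)^2 + α*β) := by
        rw [Finset.sum_add_distrib, ← trace_RH_sq M, Finset.sum_const, Finset.card_univ,
          nsmul_eq_mul, mul_assoc]
    _ ≤ ∑ i, (α+β) * |μ i| := Finset.sum_le_sum (fun i _ => key i)
    _ = M.energyRH * (α + β) := by
        rw [← Finset.mul_sum, MixedGraph.energyRH, mul_comm]
end
end

section
/- Let M be a mixed graph with an edge (or arc) e between vertices u and v such that e is a cut-edge of the underlying graph M_U. Let M_1 be obtained from M by replacing e with an undirected edge, or with an arc u→v or v→u. Then R_H(M) and R_H(M_1) have the same characteristic polynomial, hence the same spectrum and the same Hermitian-Randić energy. -/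
open Matrix BigOperators

noncomputable section
open scoped Classical

section BridgeAux

open Polynomial

private lemma charpoly_similar' {n R : Type*} [Fintype n] [DecidableEq n] [CommRing R]
    (P Q A : Matrix n n R) (h1 : Q * P = 1) :
    (Q * A * P).charpoly = A.charpoly := by
  have hcomm : Matrix.scalar n (X : R[X]) * P.map C = P.map C * Matrix.scalar n (X : R[X]) :=
    (Matrix.scalar_commute (X : R[X]) (Commute.all X) (P.map C)).eq
  have key : charmatrix (Q * A * P) = Q.map C * charmatrix A * P.map C := by
    rw [charmatrix, charmatrix, mul_sub, sub_mul]
    congr 1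
    · rw [mul_assoc, hcomm, ← mul_assoc, ← Matrix.map_mul, h1,
        Matrix.map_one C C.map_zero C.map_one, one_mul]
    · simp [RingHom.mapMatrix_apply, Matrix.map_mul]
  rw [Matrix.charpoly, Matrix.charpoly, key, Matrix.det_mul, Matrix.det_mul,
    mul_comm (Q.map C).det, mul_assoc, ← Matrix.det_mul, ← Matrix.map_mul, h1,
    Matrix.map_one C C.map_zero C.map_one, Matrix.det_one, mul_one]

private lemma charpoly_diagonal' {n R : Type*} [Fintype n] [DecidableEq n] [CommRing R]
    (d : n → R) :
    (Matrix.diagonal d).charpoly = ∏ i, (X - C (d i)) := by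
  have : charmatrix (Matrix.diagonal d) = Matrix.diagonal (fun i => X - C (d i)) := by
    ext i j
    by_cases h : i = j
    · subst h; simp [charmatrix_apply, Matrix.diagonal_apply]
    · simp [charmatrix_apply, Matrix.diagonal_apply, h]
  rw [Matrix.charpoly, this, Matrix.det_diagonal]

private lemma herm_charpoly_eq_prod' {n : Type*} [Fintype n] [DecidableEq n] {A : Matrix n n ℂ}
    (hA : A.IsHermitian) :
    A.charpoly = ∏ i, (X - C ((hA.eigenvalues i : ℂ))) := by
  have hU := hA.eigenvectorUnitary.2
  have h1 : (hA.eigenvectorUnitary : Matrix n n ℂ) *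
      star (hA.eigenvectorUnitary : Matrix n n ℂ) = 1 := by
    simpa using hU.2
  conv_lhs => rw [hA.spectral_theorem, Unitary.conjStarAlgAut_apply]
  rw [charpoly_similar' _ _ _ h1, charpoly_diagonal']
  rfl

private lemma herm_multiset_eigs' {n : Type*} [Fintype n] [DecidableEq n] {A B : Matrix n n ℂ}
    (hA : A.IsHermitian) (hB : B.IsHermitian) (h : A.charpoly = B.charpoly) :
    Finset.univ.val.map (fun i => (hA.eigenvalues i : ℂ))
      = Finset.univ.val.map (fun i => (hB.eigenvalues i : ℂ)) := by
  have hr : A.charpoly.roots = B.charpoly.roots := by rw [h]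
  rw [herm_charpoly_eq_prod' hA, herm_charpoly_eq_prod' hB] at hr
  have key : ∀ (f : n → ℂ), (∏ i, (X - C (f i))).roots = Finset.univ.val.map f := by
    intro f
    rw [Finset.prod]
    have : Multiset.map (fun i => X - C (f i)) Finset.univ.val
        = Multiset.map (fun a => X - C a) (Multiset.map f Finset.univ.val) := by
      rw [Multiset.map_map]; rfl
    rw [this, roots_multiset_prod_X_sub_C]
  rwa [key, key] at hr

private lemma herm_abs_sum_eq' {n : Type*} [Fintype n] [DecidableEq n] {A B : Matrix n n ℂ}
    (hA : A.IsHermitian) (hB : B.IsHermitian) (h : A.charpoly = B.charpoly) :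
    ∑ i, |hA.eigenvalues i| = ∑ i, |hB.eigenvalues i| := by
  have hm := congrArg (Multiset.map (fun z : ℂ => ‖z‖)) (herm_multiset_eigs' hA hB h)
  rw [Multiset.map_map, Multiset.map_map] at hm
  simp only [Function.comp, Complex.norm_real, Real.norm_eq_abs] at hm
  rw [Finset.sum, Finset.sum]
  exact congrArg Multiset.sum hm

end BridgeAux

/-- if `e = uv` is a cut-edge of the underlying graph, replacing the
edge/arc between `u` and `v` by an undirected edge or an arc (in either direction)
does not change the characteristic polynomial of `R_H`, hence neither the spectrum
nor the Hermitian–Randić energy. -/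
theorem charpoly_energy_invariant_of_bridge {V : Type} [Fintype V] [DecidableEq V]
    (M M₁ : MixedGraph V) (u v : V)
    (huv : M.h u v ≠ 0)
    (hbridge : s(u, v) ∈ M.underlying.edgeSet ∧ M.underlying.IsBridge s(u, v))
    (h₁uv : M₁.h u v ≠ 0)
    (hagree : ∀ k l, ¬(k = u ∧ l = v) → ¬(k = v ∧ l = u) → M₁.h k l = M.h k l) :
    M.RH.charpoly = M₁.RH.charpoly ∧ M₁.energyRH = M.energyRH := by
  obtain ⟨hadj, hnr⟩ := hbridge
  rw [SimpleGraph.isBridge_iff] at hnr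
  set G' : SimpleGraph V := M.underlying \ SimpleGraph.fromEdgeSet {s(u, v)} with hG'
  have hunit : ∀ z : ℂ, z ≠ 0 → (z = 0 ∨ z = 1 ∨ z = Complex.I ∨ z = -Complex.I) →
      (starRingEnd ℂ) z * z = 1 := by
    rintro z hz (rfl | rfl | rfl | rfl)
    · exact absurd rfl hz
    · simp
    · simp [Complex.I_mul_I]
    · simp [Complex.I_mul_I]
  set c : ℂ := M₁.h u v / M.h u v with hc
  have hc1 : (starRingEnd ℂ) c * c = 1 := by
    rw [hc, map_div₀, div_mul_div_comm, hunit _ h₁uv (M₁.entries u v),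
      hunit _ huv (M.entries u v), div_one]
  set d : V → ℂ := fun k => if G'.Reachable u k then 1 else c with hd
  have hdunit : ∀ k, (starRingEnd ℂ) (d k) * d k = 1 := by
    intro k
    by_cases hk : G'.Reachable u k <;> simp [hd, hk, hc1]
  have hcross : ∀ k l, M.h k l ≠ 0 → ¬(k = u ∧ l = v) → ¬(k = v ∧ l = u) →
      (G'.Reachable u k ↔ G'.Reachable u l) := by
    intro k l hkl h1 h2
    have hadjkl : G'.Adj k l := by
      rw [hG', SimpleGraph.sdiff_adj, SimpleGraph.fromEdgeSet_adj]
      refine ⟨hkl, ?_⟩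
      rintro ⟨hmem, -⟩
      rw [Set.mem_singleton_iff, Sym2.eq_iff] at hmem
      rcases hmem with h | h
      · exact h1 h
      · exact h2 h
    exact ⟨fun h => h.trans hadjkl.reachable, fun h => h.trans hadjkl.symm.reachable⟩
  have hu : G'.Reachable u u := SimpleGraph.Reachable.refl u
  have hv : ¬ G'.Reachable u v := hnr
  have hvu' : M.h v u = (starRingEnd ℂ) (M.h u v) := by
    rw [← M.herm.apply v u]; rfl
  have h₁vu' : M₁.h v u = (starRingEnd ℂ) (M₁.h u v) := by
    rw [← M₁.herm.apply v u]; rfl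
  have hvu : M.h v u ≠ 0 := by rw [hvu']; exact star_ne_zero.mpr huv
  have h₁vu : M₁.h v u ≠ 0 := by rw [h₁vu']; exact star_ne_zero.mpr h₁uv
  have hpat : ∀ k l, M₁.h k l = 0 ↔ M.h k l = 0 := by
    intro k l
    by_cases h1 : k = u ∧ l = v
    · obtain ⟨rfl, rfl⟩ := h1; exact iff_of_false h₁uv huv
    by_cases h2 : k = v ∧ l = u
    · obtain ⟨rfl, rfl⟩ := h2; exact iff_of_false h₁vu hvu
    · rw [hagree k l h1 h2]
  have hdeg : ∀ k, M₁.deg k = M.deg k := by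
    intro k
    unfold MixedGraph.deg
    congr 1
    apply Finset.filter_congr
    intro l _
    simp [hpat k l]
  -- the similarity
  have hmat : M₁.RH =
      Matrix.diagonal (fun k => (starRingEnd ℂ) (d k)) * M.RH * Matrix.diagonal d := by
    ext k l
    rw [Matrix.mul_diagonal, Matrix.diagonal_mul]
    show M₁.RH k l = (starRingEnd ℂ) (d k) * M.RH k l * d l
    unfold MixedGraph.RH
    rw [hdeg k, hdeg l]
    by_cases hk : G'.Reachable u k <;> by_cases hl : G'.Reachable u l
    · simp only [hd, if_pos hk, if_pos hl, _root_.map_one, one_mul, mul_one]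
      rw [hagree k l (by rintro ⟨rfl, rfl⟩; exact hv hl) (by rintro ⟨rfl, rfl⟩; exact hv hk)]
    · simp only [hd, if_pos hk, if_neg hl, _root_.map_one, one_mul]
      by_cases h1 : k = u ∧ l = v
      · obtain ⟨rfl, rfl⟩ := h1
        rw [hc, div_mul_div_comm, mul_comm (M.h k l) (M₁.h k l),
          mul_div_mul_right _ _ huv]
      · have h2 : ¬(k = v ∧ l = u) := by rintro ⟨rfl, rfl⟩; exact hl hu
        have hz : M.h k l = 0 := by
          by_contra hnz
          exact hl ((hcross k l hnz h1 h2).mp hk)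
        rw [hagree k l h1 h2, hz]
        simp
    · simp only [hd, if_neg hk, if_pos hl, mul_one]
      by_cases h2 : k = v ∧ l = u
      · obtain ⟨rfl, rfl⟩ := h2
        rw [hvu', h₁vu', hc, map_div₀, div_mul_div_comm,
          mul_comm ((starRingEnd ℂ) (M₁.h l k)) ((starRingEnd ℂ) (M.h l k)),
          mul_div_mul_left _ _ (show (starRingEnd ℂ) (M.h l k) ≠ 0 from star_ne_zero.mpr huv)]
      · have h1 : ¬(k = u ∧ l = v) := by rintro ⟨rfl, rfl⟩; exact hk hu
        have hz : M.h k l = 0 := by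
          by_contra hnz
          exact hk ((hcross k l hnz h1 h2).mpr hl)
        rw [hagree k l h1 h2, hz]
        simp
    · simp only [hd, if_neg hk, if_neg hl]
      have h1 : ¬(k = u ∧ l = v) := by rintro ⟨rfl, rfl⟩; exact hk hu
      have h2 : ¬(k = v ∧ l = u) := by rintro ⟨rfl, rfl⟩; exact hl hu
      rw [hagree k l h1 h2, mul_right_comm, hc1, one_mul]
  have hED : Matrix.diagonal (fun k => (starRingEnd ℂ) (d k)) * Matrix.diagonal d = 1 := by
    rw [Matrix.diagonal_mul_diagonal]
    have : (fun k => (starRingEnd ℂ) (d k) * d k) = fun _ => (1 : ℂ) := funext hdunit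
    rw [this, Matrix.diagonal_one]
  have hcp : M.RH.charpoly = M₁.RH.charpoly := by
    rw [hmat, charpoly_similar' _ _ _ hED]
  exact ⟨hcp, herm_abs_sum_eq' M₁.RH_isHermitian M.RH_isHermitian hcp.symm⟩
end
end

section
/- Let T be a mixed tree (its underlying graph T_U is a tree) and T' the mixed tree obtained from T by reversing the orientations of all arcs incident with a fixed vertex. Then E_{R_H}(T) = E_{R_H}(T'). -/
open Matrix BigOperators

noncomputable section
open scoped Classical

section Aux

open Polynomial Finset SimpleGraph

/-- charpoly is invariant under conjugation by a matrix with a one-sided inverse. -/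
lemma aux_charpoly_conj {n : Type*} [Fintype n] [DecidableEq n]
    (A P Q : Matrix n n ℂ) (hPQ : P * Q = 1) :
    (P * A * Q).charpoly = A.charpoly := by
  have hmap : ∀ M N : Matrix n n ℂ, (M * N).map (Polynomial.C : ℂ →+* ℂ[X]) = M.map C * N.map C :=
    fun M N => Matrix.map_mul
  have h1 : (P * Q).map (C : ℂ →+* ℂ[X]) = 1 := by
    rw [hPQ]; exact Matrix.map_one _ (map_zero _) (map_one _)
  have key : charmatrix (P * A * Q) = P.map C * charmatrix A * Q.map C := by
    unfold charmatrix
    rw [Matrix.mul_sub, Matrix.sub_mul]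
    congr 1
    · rw [mul_assoc, (Matrix.scalar_commute X (fun r => Commute.all X r) (Q.map C)).eq,
        ← mul_assoc, ← hmap, h1, one_mul]
    · simp only [RingHom.mapMatrix_apply, hmap]
  rw [Matrix.charpoly, key, det_mul, det_mul, Matrix.charpoly]
  have hd : (P.map (C : ℂ →+* ℂ[X])).det * (Q.map C).det = 1 := by
    rw [← det_mul, ← hmap, h1, det_one]
  calc (P.map (C : ℂ →+* ℂ[X])).det * (charmatrix A).det * (Q.map C).det
      = (charmatrix A).det * ((P.map C).det * (Q.map C).det) := by ring
    _ = (charmatrix A).det := by rw [hd, mul_one]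

lemma aux_charpoly_diag {n : Type*} [Fintype n] [DecidableEq n] (d : n → ℂ) :
    (Matrix.diagonal d).charpoly = ∏ i, (X - C (d i)) := by
  rw [Matrix.charpoly]
  have : charmatrix (Matrix.diagonal d) = Matrix.diagonal (fun i => X - C (d i)) := by
    ext i j
    by_cases h : i = j
    · subst h; simp [charmatrix_apply_eq]
    · simp [charmatrix_apply_ne _ _ _ h, Matrix.diagonal_apply_ne _ h, Matrix.diagonal_apply_ne d h]
  rw [this, det_diagonal]

lemma aux_herm_roots {n : Type*} [Fintype n] [DecidableEq n] {A : Matrix n n ℂ}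
    (hA : A.IsHermitian) :
    A.charpoly.roots = Finset.univ.val.map (fun i => (hA.eigenvalues i : ℂ)) := by
  have hU := hA.spectral_theorem
  have h1 : (hA.eigenvectorUnitary : Matrix n n ℂ) * (star (hA.eigenvectorUnitary : Matrix n n ℂ)) = 1 := by
    exact_mod_cast (Matrix.mem_unitaryGroup_iff).mp hA.eigenvectorUnitary.2
  have hcp : A.charpoly = (Matrix.diagonal (RCLike.ofReal ∘ hA.eigenvalues)).charpoly := by
    conv_lhs => rw [hU]
    exact aux_charpoly_conj _ _ _ h1
  rw [hcp, aux_charpoly_diag]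
  have : ∏ i, (X - C ((RCLike.ofReal ∘ hA.eigenvalues) i)) =
      ((Finset.univ.val.map fun i => (hA.eigenvalues i : ℂ)).map fun a => X - C a).prod := by
    rw [Multiset.map_map]; rfl
  rw [this, Polynomial.roots_multiset_prod_X_sub_C]

lemma aux_energy_multiset {n : Type*} [Fintype n] [DecidableEq n] {A : Matrix n n ℂ}
    (hA : A.IsHermitian) :
    ∑ i, |hA.eigenvalues i| = (A.charpoly.roots.map (fun z : ℂ => ‖z‖)).sum := by
  rw [aux_herm_roots hA, Multiset.map_map, Finset.sum]
  congr 1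
  apply Multiset.map_congr rfl
  intro i _
  simp [Complex.norm_real]

lemma aux_getVert_one_concat {V : Type} {G : SimpleGraph V} {u k l : V}
    (p : G.Walk u k) (a : G.Adj k l) (hp : 1 ≤ p.length) :
    (p.concat a).getVert 1 = p.getVert 1 := by
  rw [SimpleGraph.Walk.concat_eq_append, SimpleGraph.Walk.getVert_append]
  rcases lt_or_eq_of_le hp with h | h
  · simp [h]
  · rw [if_neg (by omega)]
    have h1 : p.getVert 1 = k := by conv_lhs => rw [h]; rw [p.getVert_length]
    simp [← h, h1]

lemma aux_concat_isPath {V : Type} {G : SimpleGraph V} {u k l : V} {p : G.Walk u k}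
    (hp : p.IsPath) (a : G.Adj k l) (hl : l ∉ p.support) : (p.concat a).IsPath := by
  rw [← SimpleGraph.Walk.isPath_reverse_iff, SimpleGraph.Walk.reverse_concat]
  exact hp.reverse.cons (by simpa using hl)

/-- if `l` lies on the path `p` from `v` to `k` and `k ≠ l`, then `k` is not on
`p.takeUntil l`. -/
lemma aux_not_mem_takeUntil {V : Type} [DecidableEq V] {G : SimpleGraph V} {v k l : V}
    {p : G.Walk v k} (hp : p.IsPath) (hl : l ∈ p.support) (hkl : k ≠ l) :
    k ∉ (p.takeUntil l hl).support := by
  intro hk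
  have hspec := p.take_spec hl
  have hnodup : p.support.Nodup := hp.support_nodup
  have hsupp : p.support = (p.takeUntil l hl).support ++ (p.dropUntil l hl).support.tail := by
    conv_lhs => rw [← hspec]
    exact SimpleGraph.Walk.support_append _ _
  rw [hsupp] at hnodup
  have hdis := (List.nodup_append.mp hnodup).2.2
  have hk2 : k ∈ (p.dropUntil l hl).support.tail := by
    have hmem : k ∈ (p.dropUntil l hl).support := SimpleGraph.Walk.end_mem_support _
    have hcons : (p.dropUntil l hl).support = l :: (p.dropUntil l hl).support.tail :=
      SimpleGraph.Walk.support_eq_cons _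
    rw [hcons] at hmem
    rcases List.mem_cons.mp hmem with h | h
    · exact absurd h hkl
    · exact h
  exact hdis k hk k hk2 rfl

end Aux

/-- reversing the orientations of all arcs incident with a fixed
vertex of a mixed tree does not change the Hermitian–Randić energy. -/
theorem energyRH_reverse_at_vertex {V : Type} [Fintype V] [DecidableEq V]
    (T T' : MixedGraph V) (hTree : T.underlying.IsTree) (v : V)
    (hrev : ∀ k l, T'.h k l = if k = v ∨ l = v then star (T.h k l) else T.h k l) :
    T.energyRH = T'.energyRH := by
  classical
  set G := T.underlying with hG
  -- zero entries coincide
  have hzero : ∀ k l, T'.h k l = 0 ↔ T.h k l = 0 := by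
    intro k l
    rw [hrev]
    split
    · exact star_eq_zero
    · exact Iff.rfl
  -- degrees coincide
  have hdeg : ∀ k, T'.deg k = T.deg k := by
    intro k
    unfold MixedGraph.deg
    congr 1
    apply Finset.filter_congr
    intro l _
    simp [hzero k l]
  have hsym : ∀ a b, star (T.h a b) = T.h b a := by
    intro a b
    rw [← T.herm.apply b a]
  -- the chosen unique path from v to k
  have huniq : ∀ k (p : G.Walk v k), p.IsPath → p = (hTree.existsUnique_path v k).choose :=
    fun k p hp => (hTree.existsUnique_path v k).choose_spec.2 p hp
  have hpathW : ∀ k, ((hTree.existsUnique_path v k).choose : G.Walk v k).IsPath :=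
    fun k => (hTree.existsUnique_path v k).choose_spec.1
  set w : V → V := fun k => ((hTree.existsUnique_path v k).choose : G.Walk v k).getVert 1 with hw
  set s : V → ℂ := fun k => if k = v then 1 else if T.h v (w k) = 1 then 1 else -1 with hs
  have hsv : s v = 1 := by simp [hs]
  have hspm : ∀ k, s k = 1 ∨ s k = -1 := by
    intro k
    simp only [hs]
    split
    · left; rfl
    · split
      · left; rfl
      · right; rfl
  have hss : ∀ k, s k * s k = 1 := by
    intro k
    rcases hspm k with h | h <;> rw [h] <;> ring
  -- paths to vertices adjacent to v are single edges
  have hwadj : ∀ l, T.h v l ≠ 0 → w l = l := by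
    intro l hvl
    have hadj : G.Adj v l := hvl
    have hne : v ≠ l := hadj.ne
    have hpath : (SimpleGraph.Walk.cons hadj SimpleGraph.Walk.nil).IsPath := by
      simp [hne]
    have heq := huniq l _ hpath
    show ((hTree.existsUnique_path v l).choose : G.Walk v l).getVert 1 = l
    rw [← heq]
    simp
  -- sign relation at neighbours of v
  have hsnb : ∀ l, T.h v l ≠ 0 → s l * T.h v l = star (T.h v l) := by
    intro l hvl
    have hlv : l ≠ v := by
      intro h; apply hvl; rw [h]; exact T.loopless v
    have hsl : s l = if T.h v l = 1 then 1 else -1 := by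
      simp only [hs, if_neg hlv, hwadj l hvl]
    rcases T.entries v l with h0 | h1 | hI | hI'
    · exact absurd h0 hvl
    · rw [hsl, if_pos h1, h1]; simp
    · have hne1 : T.h v l ≠ 1 := by
        rw [hI]; intro hc
        have := congrArg Complex.im hc; simp at this
      rw [hsl, if_neg hne1, hI]
      simp [Complex.star_def, Complex.conj_I]
    · have hne1 : T.h v l ≠ 1 := by
        rw [hI']; intro hc
        have := congrArg Complex.im hc; simp at this
      rw [hsl, if_neg hne1, hI']
      simp [Complex.star_def, Complex.conj_I]
  -- signs propagate along edges away from v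
  have hclaim : ∀ k l (hk : k ≠ v) (hl : l ≠ v) (a : G.Adj k l),
      l ∉ ((hTree.existsUnique_path v k).choose : G.Walk v k).support → w l = w k := by
    intro k l hk hl a hnl
    set p : G.Walk v k := (hTree.existsUnique_path v k).choose with hp
    have hpl : 1 ≤ p.length := by
      by_contra hcon
      push_neg at hcon
      interval_cases hlen : p.length
      exact hk (SimpleGraph.Walk.eq_of_length_eq_zero hlen).symm
    have hq : (p.concat a).IsPath := aux_concat_isPath (hpathW k) a hnl
    have heq := huniq l _ hq
    show ((hTree.existsUnique_path v l).choose : G.Walk v l).getVert 1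
      = ((hTree.existsUnique_path v k).choose : G.Walk v k).getVert 1
    rw [← heq]
    exact aux_getVert_one_concat p a hpl
  have hB : ∀ k l, k ≠ v → l ≠ v → T.h k l ≠ 0 → s k = s l := by
    intro k l hk hl hkl
    have a : G.Adj k l := hkl
    have hwlk : w l = w k ∨ w k = w l := by
      by_cases hmem : l ∈ ((hTree.existsUnique_path v k).choose : G.Walk v k).support
      · right
        -- then pathW l = takeUntil, and k not in its support
        set p : G.Walk v k := (hTree.existsUnique_path v k).choose with hp
        have htu : (p.takeUntil l hmem).IsPath := (hpathW k).takeUntil hmem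
        have heq := huniq l _ htu
        have hknot : k ∉ ((hTree.existsUnique_path v l).choose : G.Walk v l).support := by
          rw [← heq]
          exact aux_not_mem_takeUntil (hpathW k) hmem a.ne
        exact hclaim l k hl hk a.symm hknot
      · left
        exact hclaim k l hk hl a hmem
    have : w k = w l := by tauto
    simp only [hs, if_neg hk, if_neg hl, this]
  -- the signature matrix
  set S : Matrix V V ℂ := Matrix.diagonal s with hS
  have hSS : S * S = 1 := by
    have h1 : (fun i => s i * s i) = fun _ => (1 : ℂ) := funext hss
    rw [hS, Matrix.diagonal_mul_diagonal, h1, Matrix.diagonal_one]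
  -- the entrywise relation
  have hhval : ∀ k l, T'.h k l = s k * T.h k l * s l := by
    intro k l
    by_cases h0 : T.h k l = 0
    · rw [(hzero k l).mpr h0, h0]; ring
    · by_cases hkv : k = v
      · rw [hrev, if_pos (Or.inl hkv), hkv, hsv, one_mul, mul_comm]
        have h0' : T.h v l ≠ 0 := hkv ▸ h0
        exact (hsnb l h0').symm
      · by_cases hlv : l = v
        · rw [hrev, if_pos (Or.inr hlv), hlv, hsv, mul_one]
          have h0' : T.h k v ≠ 0 := hlv ▸ h0
          have hvk : T.h v k ≠ 0 := by
            intro hc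
            exact h0' (by rw [← hsym v k, hc, star_zero])
          have h1 : s k * T.h v k = T.h k v := by rw [hsnb k hvk, hsym v k]
          rw [hsym k v]
          linear_combination s k * h1 - T.h v k * hss k
        · rw [hrev, if_neg (by tauto)]
          have := hB k l hkv hlv h0
          rw [mul_comm, ← mul_assoc, ← this, hss k, one_mul]
  -- the RH relation
  have hRH : T'.RH = S * T.RH * S := by
    ext k l
    have hentry : (S * T.RH * S) k l = s k * T.RH k l * s l := by
      rw [hS, Matrix.mul_diagonal, Matrix.diagonal_mul]
    rw [hentry]
    unfold MixedGraph.RH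
    rw [hdeg k, hdeg l, hhval k l]
    ring
  have hcp : T'.RH.charpoly = T.RH.charpoly := by
    rw [hRH]
    exact aux_charpoly_conj _ _ _ hSS
  unfold MixedGraph.energyRH
  rw [aux_energy_multiset T.RH_isHermitian, aux_energy_multiset T'.RH_isHermitian, hcp]
end
end

section
/- Let T be a mixed tree with underlying tree T_U. Then the Hermitian-Randić energy of T equals the Randić energy of T_U; in particular, E_{R_H}(T) does not depend on which edges are oriented or on the choice of orientations. -/
open Matrix BigOperators

noncomputable section
open scoped Classical

/-- The Randić matrix of a simple graph (over ℂ, with real entries). -/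
def randicMatrix {V : Type} [Fintype V] [DecidableEq V] (G : SimpleGraph V) :
    Matrix V V ℂ :=
  fun k l => if G.Adj k l
    then ((Real.sqrt (G.degree k) * Real.sqrt (G.degree l) : ℝ) : ℂ)⁻¹ else 0

theorem randicMatrix_isHermitian {V : Type} [Fintype V] [DecidableEq V]
    (G : SimpleGraph V) : (randicMatrix G).IsHermitian := by
  ext k l
  simp only [randicMatrix, Matrix.conjTranspose_apply]
  by_cases h : G.Adj k l
  · rw [if_pos h, if_pos h.symm, mul_comm (Real.sqrt (G.degree l))]
    simp [← Complex.ofReal_inv]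
  · rw [if_neg (fun hh : G.Adj l k => h hh.symm), if_neg h, star_zero]

/-- The Randić energy of a simple graph. -/
def randicEnergy {V : Type} [Fintype V] [DecidableEq V] (G : SimpleGraph V) : ℝ :=
  ∑ i, |(randicMatrix_isHermitian G).eigenvalues i|

section Aux

open Polynomial

/-- Characteristic polynomial is invariant under conjugation. -/
lemma my_charpoly_conj {n : Type} [Fintype n] [DecidableEq n]
    (E D M : Matrix n n ℂ) (hED : E * D = 1) :
    (E * M * D).charpoly = M.charpoly := by
  set φ : Matrix n n ℂ →+* Matrix n n ℂ[X] := (Polynomial.C : ℂ →+* ℂ[X]).mapMatrix with hφdef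
  have hφ : φ E * φ D = 1 := by rw [← _root_.map_mul, hED, _root_.map_one]
  have hcomm : Matrix.scalar n (X : ℂ[X]) * φ E = φ E * Matrix.scalar n (X : ℂ[X]) :=
    (Matrix.scalar_commute (X : ℂ[X]) (fun r => mul_comm _ _) (φ E)).eq
  have hsc : φ E * Matrix.scalar n (X : ℂ[X]) * φ D = Matrix.scalar n (X : ℂ[X]) := by
    rw [← hcomm, mul_assoc, hφ, mul_one]
  have hcm : charmatrix (E * M * D) = φ E * charmatrix M * φ D := by
    have : charmatrix (E * M * D) = Matrix.scalar n (X : ℂ[X]) - φ (E * M * D) := rfl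
    rw [this, show charmatrix M = Matrix.scalar n (X : ℂ[X]) - φ M from rfl]
    rw [mul_sub, sub_mul, hsc, _root_.map_mul, _root_.map_mul]
  have hdet : (φ E).det * (φ D).det = 1 := by rw [← Matrix.det_mul, hφ, Matrix.det_one]
  rw [Matrix.charpoly, Matrix.charpoly, hcm, Matrix.det_mul, Matrix.det_mul]
  calc (φ E).det * (charmatrix M).det * (φ D).det
      = ((φ E).det * (φ D).det) * (charmatrix M).det := by ring
    _ = (charmatrix M).det := by rw [hdet, one_mul]

/-- The characteristic polynomial of a Hermitian matrix is the product of
`X - eigenvalue`. -/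
lemma my_charpoly_hermitian {n : Type} [Fintype n] [DecidableEq n]
    {A : Matrix n n ℂ} (hA : A.IsHermitian) :
    A.charpoly = ∏ i, (Polynomial.X - Polynomial.C ((hA.eigenvalues i : ℝ) : ℂ)) := by
  have hU : ((hA.eigenvectorUnitary : Matrix n n ℂ))
      * star ((hA.eigenvectorUnitary : Matrix n n ℂ)) = 1 :=
    Matrix.mem_unitaryGroup_iff.mp hA.eigenvectorUnitary.2
  have h1 : A.charpoly
      = (Matrix.diagonal ((RCLike.ofReal ∘ hA.eigenvalues) : n → ℂ)).charpoly := by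
    conv_lhs => rw [hA.spectral_theorem]
    exact my_charpoly_conj _ _ _ hU
  have h2 : charmatrix (Matrix.diagonal ((RCLike.ofReal ∘ hA.eigenvalues) : n → ℂ))
      = Matrix.diagonal (fun i => Polynomial.X - Polynomial.C ((hA.eigenvalues i : ℝ) : ℂ)) := by
    ext i j
    by_cases h : i = j
    · subst h
      simp [Matrix.charmatrix_apply_eq, Matrix.diagonal_apply_eq]
    · simp [Matrix.charmatrix_apply_ne _ _ _ h, Matrix.diagonal_apply_ne _ h]
  rw [h1, Matrix.charpoly, h2, Matrix.det_diagonal]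

/-- The roots of `∏ (X - C (a i))` over `univ` form the multiset image of `a`. -/
lemma my_roots_prod {n : Type} [Fintype n] [DecidableEq n] (a : n → ℂ) :
    (∏ i, (Polynomial.X - Polynomial.C (a i))).roots = Finset.univ.val.map a := by
  have hcomp : (fun i => Polynomial.X - Polynomial.C (a i))
      = (fun x => Polynomial.X - Polynomial.C x) ∘ a := rfl
  rw [Finset.prod_eq_multiset_prod, hcomp, ← Multiset.map_map,
    Polynomial.roots_multiset_prod_X_sub_C]

/-- Weight of a walk in the underlying graph of a mixed graph. -/
def MGwgt {V : Type} [Fintype V] [DecidableEq V] (T : MixedGraph V) {u v : V}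
    (p : T.underlying.Walk u v) : ℂ :=
  (p.darts.map fun d => star (T.h d.toProd.1 d.toProd.2)).prod

lemma MG_h_mul_star {V : Type} [Fintype V] [DecidableEq V] (T : MixedGraph V)
    {u v : V} (h : T.h u v ≠ 0) : T.h u v * star (T.h u v) = 1 := by
  rcases T.entries u v with h0 | h1 | h2 | h3
  · exact absurd h0 h
  · rw [h1]; simp
  · rw [h2]; simp [Complex.ext_iff]
  · rw [h3]; simp [Complex.ext_iff]

lemma MGwgt_mul_star {V : Type} [Fintype V] [DecidableEq V] (T : MixedGraph V)
    {u v : V} (p : T.underlying.Walk u v) : MGwgt T p * star (MGwgt T p) = 1 := by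
  induction p with
  | nil => simp [MGwgt]
  | @cons a b c hab q ih =>
    have hne : T.h a b ≠ 0 := hab
    simp only [MGwgt, SimpleGraph.Walk.darts_cons, List.map_cons, List.prod_cons] at *
    rw [star_mul', star_star]
    calc star (T.h a b) * (q.darts.map fun d => star (T.h d.toProd.1 d.toProd.2)).prod
          * (T.h a b * star ((q.darts.map fun d => star (T.h d.toProd.1 d.toProd.2)).prod))
        = (T.h a b * star (T.h a b))
          * ((q.darts.map fun d => star (T.h d.toProd.1 d.toProd.2)).prod
            * star ((q.darts.map fun d => star (T.h d.toProd.1 d.toProd.2)).prod)) := by ring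
      _ = 1 := by rw [MG_h_mul_star T hne, ih, one_mul]

lemma MGwgt_append {V : Type} [Fintype V] [DecidableEq V] (T : MixedGraph V)
    {u v w : V} (p : T.underlying.Walk u v) (q : T.underlying.Walk v w) :
    MGwgt T (p.append q) = MGwgt T p * MGwgt T q := by
  simp [MGwgt, SimpleGraph.Walk.darts_append]

lemma MGwgt_concat {V : Type} [Fintype V] [DecidableEq V] (T : MixedGraph V)
    {u v w : V} (p : T.underlying.Walk u v) (h : T.underlying.Adj v w) :
    MGwgt T (p.concat h) = MGwgt T p * star (T.h v w) := by
  simp [MGwgt, SimpleGraph.Walk.darts_concat, List.concat_eq_append]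

end Aux

/-- the Hermitian–Randić energy of a mixed tree equals the Randić
energy of its underlying tree (hence is independent of the orientation). -/
theorem energyRH_tree_eq_randicEnergy {V : Type} [Fintype V] [DecidableEq V]
    (T : MixedGraph V) (hTree : T.underlying.IsTree) :
    T.energyRH = randicEnergy T.underlying := by
  classical
  obtain ⟨r⟩ := hTree.isConnected.nonempty
  have hUP := hTree.existsUnique_path
  set G := T.underlying with hG
  -- the chosen path from the root to each vertex
  let P : ∀ v, G.Walk r v := fun v => (hUP r v).choose
  have hP : ∀ v, (P v).IsPath := fun v => (hUP r v).choose_spec.1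
  have hPu : ∀ v (q : G.Walk r v), q.IsPath → q = P v :=
    fun v q hq => (hUP r v).choose_spec.2 q hq
  -- the switching function
  let φ : V → ℂ := fun v => MGwgt T (P v)
  have hφ1 : ∀ v, φ v * star (φ v) = 1 := fun v => MGwgt_mul_star T (P v)
  -- the key property of the switching function
  have hkey : ∀ k l, T.h k l ≠ 0 → star (φ k) * T.h k l * φ l = 1 := by
    intro k l hkl
    have hadj : G.Adj k l := hkl
    by_cases hl : l ∈ (P k).support
    · -- `P k` passes through `l`
      have htake := SimpleGraph.Walk.take_spec (P k) hl
      have h1 : (P k).takeUntil l hl = P l :=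
        hPu l _ ((hP k).takeUntil hl)
      have hlk : T.h l k ≠ 0 := hadj.symm
      have h2 : (P k).dropUntil l hl
          = SimpleGraph.Walk.cons hadj.symm SimpleGraph.Walk.nil := by
        have hu := hTree.existsUnique_path l k
        have hp2 : ((P k).dropUntil l hl).IsPath := (hP k).dropUntil hl
        have hsingle : (SimpleGraph.Walk.cons hadj.symm
            (SimpleGraph.Walk.nil : G.Walk k k)).IsPath := by
          rw [SimpleGraph.Walk.cons_isPath_iff]
          exact ⟨SimpleGraph.Walk.IsPath.nil, by simp [hadj.ne']⟩
        rw [hu.choose_spec.2 _ hp2, hu.choose_spec.2 _ hsingle]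
      have hφk : φ k = φ l * T.h k l := by
        have : MGwgt T (((P k).takeUntil l hl).append ((P k).dropUntil l hl))
            = MGwgt T (P k) := by rw [htake]
        rw [MGwgt_append, h1, h2] at this
        have hcons : MGwgt T (SimpleGraph.Walk.cons hadj.symm
            (SimpleGraph.Walk.nil : G.Walk k k)) = star (T.h l k) := by
          simp [MGwgt]
        rw [hcons, T.herm.apply k l] at this
        exact this.symm
      rw [hφk, star_mul']
      calc star (φ l) * star (T.h k l) * T.h k l * φ l
          = (φ l * star (φ l)) * (T.h k l * star (T.h k l)) := by ring
        _ = 1 := by rw [hφ1 l, MG_h_mul_star T hkl, one_mul]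
    · -- extend `P k` by the edge `kl`
      have hq : ((P k).concat hadj).IsPath := by
        rw [← SimpleGraph.Walk.isPath_reverse_iff, SimpleGraph.Walk.reverse_concat,
          SimpleGraph.Walk.cons_isPath_iff]
        refine ⟨(hP k).reverse, ?_⟩
        simpa [SimpleGraph.Walk.support_reverse] using hl
      have hφl : φ l = φ k * star (T.h k l) := by
        have := hPu l _ hq
        show MGwgt T (P l) = _
        rw [← this, MGwgt_concat]
      rw [hφl]
      calc star (φ k) * T.h k l * (φ k * star (T.h k l))
          = (φ k * star (φ k)) * (T.h k l * star (T.h k l)) := by ring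
        _ = 1 := by rw [hφ1 k, MG_h_mul_star T hkl, one_mul]
  -- degrees agree
  have hdeg : ∀ k, T.deg k = G.degree k := by
    intro k
    rw [SimpleGraph.degree, SimpleGraph.neighborFinset_eq_filter, MixedGraph.deg]
    congr 1
    ext x
    simp only [Finset.mem_filter, Finset.mem_univ, true_and]
    exact Iff.rfl
  -- the similarity
  have hED : Matrix.diagonal (fun v => star (φ v)) * Matrix.diagonal φ = 1 := by
    rw [Matrix.diagonal_mul_diagonal,
      show (fun v => star (φ v) * φ v) = fun _ => (1 : ℂ) from
        funext fun v => by rw [mul_comm]; exact hφ1 v]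
    exact Matrix.diagonal_one
  have hsim : Matrix.diagonal (fun v => star (φ v)) * T.RH * Matrix.diagonal φ
      = randicMatrix G := by
    ext k l
    rw [Matrix.mul_diagonal, Matrix.diagonal_mul]
    by_cases hkl : T.h k l = 0
    · have : ¬ G.Adj k l := fun h => h hkl
      simp [MixedGraph.RH, randicMatrix, hkl, this]
    · have hadj : G.Adj k l := hkl
      rw [randicMatrix, if_pos hadj, MixedGraph.RH, ← hdeg k, ← hdeg l]
      have h1 := hkey k l hkl
      set c : ℂ := ((Real.sqrt (T.deg k) * Real.sqrt (T.deg l) : ℝ) : ℂ) with hc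
      calc star (φ k) * (T.h k l / c) * φ l
          = (star (φ k) * T.h k l * φ l) * c⁻¹ := by ring
        _ = c⁻¹ := by rw [h1, one_mul]
  -- equal characteristic polynomials
  have hcp : (T.RH).charpoly = (randicMatrix G).charpoly := by
    rw [← hsim]
    exact (my_charpoly_conj _ _ _ hED).symm
  -- hence equal eigenvalue multisets
  have hprod : ∏ i, (Polynomial.X - Polynomial.C ((T.RH_isHermitian.eigenvalues i : ℝ) : ℂ))
      = ∏ i, (Polynomial.X
        - Polynomial.C (((randicMatrix_isHermitian G).eigenvalues i : ℝ) : ℂ)) := by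
    rw [← my_charpoly_hermitian T.RH_isHermitian,
      ← my_charpoly_hermitian (randicMatrix_isHermitian G), hcp]
  have hms : Finset.univ.val.map (fun i => ((T.RH_isHermitian.eigenvalues i : ℝ) : ℂ))
      = Finset.univ.val.map
        (fun i => (((randicMatrix_isHermitian G).eigenvalues i : ℝ) : ℂ)) := by
    have := congrArg Polynomial.roots hprod
    rwa [my_roots_prod, my_roots_prod] at this
  -- conclude about energies
  have habs : ∀ (b : V → ℝ), ∑ i, |b i|
      = ((Finset.univ.val.map fun i => ((b i : ℝ) : ℂ)).map (fun z : ℂ => ‖z‖)).sum := by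
    intro b
    rw [Multiset.map_map, Finset.sum_eq_multiset_sum]
    congr 1
    apply Multiset.map_congr rfl
    intro i _
    simp [Complex.norm_real]
  rw [MixedGraph.energyRH, randicEnergy, habs, habs, hms]
end
end
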